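/- Let R : V → H be a surjective bounded linear operator between real Hilbert spaces, A : H → H and B : V → V bounded self-adjoint coercive operators with B bijective with bounded inverse B⁻¹, and D : H → V the B-weighted pseudoinverse of R. Set S := D* ∘ B ∘ D : H → H and T := R ∘ B⁻¹ ∘ R* ∘ A : H → H. Then T is self-adjoint with respect to both induced scalar products (·,·)_S and (·,·)_A, i.e. (S T u, v)_H = (S u, T v)_H and (A T u, v)_H = (A u, T v)_H for all u, v ∈ H. -/

import Mathlib

open RealInnerProductSpace

/-- With `R : V → H` surjective bounded linear, `A : H → H` and `B : V → V`
bounded self-adjoint coercive, `B'` the bounded inverse of `B`, and `D : H → V` the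
`B`-weighted pseudoinverse of `R`, set `S := D* ∘ B ∘ D` and `T := R ∘ B' ∘ R* ∘ A`.
Then `T` is self-adjoint with respect to both scalar products `(·,·)_S` and `(·,·)_A`:
`⟪S (T u), w⟫ = ⟪S u, T w⟫` and `⟪A (T u), w⟫ = ⟪A u, T w⟫` for all `u, w ∈ H`. -/
theorem statement8
    {V H : Type*} [NormedAddCommGroup V] [InnerProductSpace ℝ V] [CompleteSpace V]
    [NormedAddCommGroup H] [InnerProductSpace ℝ H] [CompleteSpace H]
    (R : V →L[ℝ] H) (hR : Function.Surjective R)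
    (A : H →L[ℝ] H)
    (hAsa : ∀ u w : H, ⟪A u, w⟫ = ⟪u, A w⟫)
    (cA : ℝ) (hcA : 0 < cA) (hAcoer : ∀ u : H, cA * ‖u‖ ^ 2 ≤ ⟪A u, u⟫)
    (B : V →L[ℝ] V)
    (hBsa : ∀ x z : V, ⟪B x, z⟫ = ⟪x, B z⟫)
    (cB : ℝ) (hcB : 0 < cB) (hBcoer : ∀ x : V, cB * ‖x‖ ^ 2 ≤ ⟪B x, x⟫)
    (B' : V →L[ℝ] V) (hB'l : ∀ x : V, B' (B x) = x) (hB'r : ∀ x : V, B (B' x) = x)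
    (D : H →L[ℝ] V)
    (hD1 : ∀ y : H, R (D y) = y)
    (hD2 : ∀ y : H, ∀ k ∈ LinearMap.ker (R : V →ₗ[ℝ] H), ⟪B (D y), k⟫ = 0)
    (S : H →L[ℝ] H) (hS : S = (ContinuousLinearMap.adjoint D).comp (B.comp D))
    (T : H →L[ℝ] H) (hT : T = R.comp (B'.comp ((ContinuousLinearMap.adjoint R).comp A))) :
    (∀ u w : H, ⟪S (T u), w⟫ = ⟪S u, T w⟫) ∧
    (∀ u w : H, ⟪A (T u), w⟫ = ⟪A u, T w⟫) := by
  have hB'sa : ∀ x z : V, ⟪B' x, z⟫ = ⟪x, B' z⟫ := by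
    intro x z
    calc ⟪B' x, z⟫ = ⟪B' x, B (B' z)⟫ := by rw [hB'r]
      _ = ⟪B (B' x), B' z⟫ := (hBsa _ _).symm
      _ = ⟪x, B' z⟫ := by rw [hB'r]
  have hSapp : ∀ u v : H, ⟪S u, v⟫ = ⟪B (D u), D v⟫ := by
    intro u v
    rw [hS]
    simp [ContinuousLinearMap.adjoint_inner_left]
  have hSsa : ∀ u v : H, ⟪S u, v⟫ = ⟪u, S v⟫ := by
    intro u v
    rw [hSapp, hBsa, real_inner_comm, ← hSapp, real_inner_comm]
  have hSTA : ∀ u w : H, ⟪S (T u), w⟫ = ⟪A u, w⟫ := by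
    intro u w
    have hker : D (T u) - B' ((ContinuousLinearMap.adjoint R) (A u)) ∈ LinearMap.ker (R : V →ₗ[ℝ] H) := by
      rw [LinearMap.mem_ker, ContinuousLinearMap.coe_coe, map_sub, hD1, hT]
      simp
    have h0 := hD2 w _ hker
    rw [inner_sub_right, sub_eq_zero] at h0
    calc ⟪S (T u), w⟫ = ⟪B (D (T u)), D w⟫ := hSapp _ _
      _ = ⟪B (D w), D (T u)⟫ := by rw [hBsa, real_inner_comm]
      _ = ⟪B (D w), B' ((ContinuousLinearMap.adjoint R) (A u))⟫ := h0
      _ = ⟪B' (B (D w)), (ContinuousLinearMap.adjoint R) (A u)⟫ := (hB'sa _ _).symm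
      _ = ⟪D w, (ContinuousLinearMap.adjoint R) (A u)⟫ := by rw [hB'l]
      _ = ⟪A u, R (D w)⟫ := by
          rw [real_inner_comm, ContinuousLinearMap.adjoint_inner_left]
      _ = ⟪A u, w⟫ := by rw [hD1]
  constructor
  · intro u w
    calc ⟪S (T u), w⟫ = ⟪A u, w⟫ := hSTA u w
      _ = ⟪w, A u⟫ := real_inner_comm _ _
      _ = ⟪A w, u⟫ := (hAsa w u).symm
      _ = ⟪S (T w), u⟫ := (hSTA w u).symm
      _ = ⟪T w, S u⟫ := by rw [← hSsa, real_inner_comm]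
      _ = ⟪S u, T w⟫ := real_inner_comm _ _
  · intro u w
    calc ⟪A (T u), w⟫ = ⟪T u, A w⟫ := hAsa _ _
      _ = ⟪A w, R (B' ((ContinuousLinearMap.adjoint R) (A u)))⟫ := by
          rw [hT]; exact real_inner_comm _ _
      _ = ⟪(ContinuousLinearMap.adjoint R) (A w), B' ((ContinuousLinearMap.adjoint R) (A u))⟫ :=
          (ContinuousLinearMap.adjoint_inner_left _ _ _).symm
      _ = ⟪B' ((ContinuousLinearMap.adjoint R) (A w)), (ContinuousLinearMap.adjoint R) (A u)⟫ :=
          (hB'sa _ _).symm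
      _ = ⟪(ContinuousLinearMap.adjoint R) (A u), B' ((ContinuousLinearMap.adjoint R) (A w))⟫ :=
          real_inner_comm _ _
      _ = ⟪A u, R (B' ((ContinuousLinearMap.adjoint R) (A w)))⟫ :=
          ContinuousLinearMap.adjoint_inner_left _ _ _
      _ = ⟪A u, T w⟫ := by rw [hT]; rfl
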